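/- Let 0 < ε < 1/4 and n ≥ 2, and set x = (1+ε)/(n−1) and I(ε) = max{e^{−ε²/8}, √e/2}. Then for the complete graph K_n, |L(x, K_n) − ε(n−1)/(1+ε)| ≤ n·I(ε)^{n/2}/(1 − I(ε)^n). -/

import Mathlib

open Filter Topology

/-- A self-avoiding walk from `o` in the graph `G`, encoded as the (nonempty) list of
visited vertices: it starts at `o`, consecutive vertices are adjacent, and no vertex is
visited more than once.  A list of length `k+1` corresponds to a walk with `k` edges. -/
def IsSAWFrom {V : Type*} (G : SimpleGraph V) (o : V) (l : List V) : Prop :=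
  l.head? = some o ∧ l.Chain' G.Adj ∧ l.Nodup

/-- `sawCount G o k = |SAW_k(o,G)|`, the number of self-avoiding walks from `o` with
exactly `k` edges. -/
noncomputable def sawCount {V : Type*} (G : SimpleGraph V) (o : V) (k : ℕ) : ℕ :=
  Nat.card {l : List V // IsSAWFrom G o l ∧ l.length = k + 1}

/-- The partition function `Z_{o,G}(x) = Σ_k |SAW_k(o,G)| x^k`.  Since a self-avoiding
walk in a graph on `|V|` vertices has at most `|V| - 1` edges, the sum over
`k < |V|` captures all nonzero terms. -/
noncomputable def sawZ {V : Type*} [Fintype V] (G : SimpleGraph V) (o : V) (x : ℝ) : ℝ :=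
  ∑ k ∈ Finset.range (Fintype.card V), (sawCount G o k : ℝ) * x ^ k

/-- The expected length `L(x,o,G) = Z_{o,G}(x)⁻¹ Σ_k k |SAW_k(o,G)| x^k`. -/
noncomputable def sawL {V : Type*} [Fintype V] (G : SimpleGraph V) (o : V) (x : ℝ) : ℝ :=
  (sawZ G o x)⁻¹ *
    ∑ k ∈ Finset.range (Fintype.card V), (k : ℝ) * (sawCount G o k : ℝ) * x ^ k

/-- The number of pairs `(ω, ω')` of self-avoiding walks from `o`, with `k` resp. `j`
edges, whose vertex sets intersect exactly in `{o}`. -/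
noncomputable def sawPairCount {V : Type*} (G : SimpleGraph V) (o : V) (k j : ℕ) : ℕ :=
  Nat.card {p : List V × List V //
    (IsSAWFrom G o p.1 ∧ p.1.length = k + 1) ∧
    (IsSAWFrom G o p.2 ∧ p.2.length = j + 1) ∧
    {v | v ∈ p.1 ∧ v ∈ p.2} = {o}}

/-- The trivial-intersection probability
`I(x,o,G) = Z_{o,G}(x)⁻² Σ x^{|ω|+|ω'|}`, summed over pairs of self-avoiding walks
from `o` whose vertex sets meet only in `o`. -/
noncomputable def sawI {V : Type*} [Fintype V] (G : SimpleGraph V) (o : V) (x : ℝ) : ℝ :=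
  ((sawZ G o x) ^ 2)⁻¹ *
    ∑ k ∈ Finset.range (Fintype.card V), ∑ j ∈ Finset.range (Fintype.card V),
      (sawPairCount G o k j : ℝ) * x ^ (k + j)

/-- The finite-graph critical exponent `γ(x,o,G) = log Z_{o,G}(x) / log (L(x,o,G) + 1)`. -/
noncomputable def sawGamma {V : Type*} [Fintype V] (G : SimpleGraph V) (o : V) (x : ℝ) : ℝ :=
  Real.log (sawZ G o x) / Real.log (sawL G o x + 1)

/-- A graph is vertex-transitive if its automorphism group acts transitively on vertices. -/
def SimpleGraph.VertexTransitive {V : Type*} (G : SimpleGraph V) : Prop :=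
  ∀ u v : V, ∃ φ : G ≃g G, φ u = v

/-- A graph is `d`-regular: every vertex has exactly `d` neighbours. -/
def SawRegular {V : Type*} (G : SimpleGraph V) (d : ℕ) : Prop :=
  ∀ v : V, Nat.card (G.neighborSet v) = d

/-- `(x n)` is super-critical for the rooted family `(G n, o n)`:
`liminf_n Z_{o_n, G_n}(x_n) = ∞`, i.e. `Z` tends to infinity. -/
def SawSuperCritical {V : ℕ → Type*} [∀ n, Fintype (V n)]
    (G : ∀ n, SimpleGraph (V n)) (o : ∀ n, V n) (x : ℕ → ℝ) : Prop :=
  Tendsto (fun n => sawZ (G n) (o n) (x n)) atTop atTop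

/-- `(x n)` is sub-critical for the rooted family `(G n, o n)`:
`limsup_n Z_{o_n, G_n}(x_n) < ∞`, i.e. the sequence of partition functions is bounded. -/
def SawSubCritical {V : ℕ → Type*} [∀ n, Fintype (V n)]
    (G : ∀ n, SimpleGraph (V n)) (o : ∀ n, V n) (x : ℕ → ℝ) : Prop :=
  BddAbove (Set.range fun n => sawZ (G n) (o n) (x n))

/-- `(x n)` is critical: for every `0 < ε < 1`, `(x n (1+ε))` is super-critical and
`(x n (1-ε))` is sub-critical. -/
def SawCritical {V : ℕ → Type*} [∀ n, Fintype (V n)]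
    (G : ∀ n, SimpleGraph (V n)) (o : ∀ n, V n) (x : ℕ → ℝ) : Prop :=
  ∀ ε : ℝ, 0 < ε → ε < 1 →
    SawSuperCritical G o (fun n => x n * (1 + ε)) ∧
    SawSubCritical G o (fun n => x n * (1 - ε))

/-- `Z_{K_n}(x)` for the complete graph `K_n` on `n` vertices, rooted at an arbitrary
vertex (all choices agree by symmetry); junk value `0` for `n = 0`. -/
noncomputable def completeZ (n : ℕ) (x : ℝ) : ℝ :=
  if h : 0 < n then sawZ (⊤ : SimpleGraph (Fin n)) ⟨0, h⟩ x else 0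

/-- `L(x, K_n)` for the complete graph `K_n`; junk value `0` for `n = 0`. -/
noncomputable def completeL (n : ℕ) (x : ℝ) : ℝ :=
  if h : 0 < n then sawL (⊤ : SimpleGraph (Fin n)) ⟨0, h⟩ x else 0

/-- `I(x, K_n)` for the complete graph `K_n`; junk value `0` for `n = 0`. -/
noncomputable def completeI (n : ℕ) (x : ℝ) : ℝ :=
  if h : 0 < n then sawI (⊤ : SimpleGraph (Fin n)) ⟨0, h⟩ x else 0

/-- `γ(x, K_n)` for the complete graph `K_n`; junk value `0` for `n = 0`. -/
noncomputable def completeGamma (n : ℕ) (x : ℝ) : ℝ :=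
  if h : 0 < n then sawGamma (⊤ : SimpleGraph (Fin n)) ⟨0, h⟩ x else 0

/-- A non-backtracking walk in `G`, encoded as the list of visited vertices:
consecutive vertices are adjacent and `ω_{j+2} ≠ ω_j` for all `j`. -/
def IsNBWalk {V : Type*} (G : SimpleGraph V) (l : List V) : Prop :=
  l.Chain' G.Adj ∧ ∀ i, i + 2 < l.length → l[i]? ≠ l[i + 2]?

/-- The number of non-backtracking walks of length `t` from `u` to `v`. -/
noncomputable def nbCount {V : Type*} (G : SimpleGraph V) (u v : V) (t : ℕ) : ℕ :=
  Nat.card {l : List V //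
    IsNBWalk G l ∧ l.length = t + 1 ∧ l.head? = some u ∧ l.getLast? = some v}

/-- `p_t(u,v)`: the number of non-backtracking walks of length `t` from `u` to `v`
divided by `d(d-1)^{t-1}`, i.e. the probability that the non-backtracking random walk
on a `d`-regular graph started at `u` is at `v` at time `t`. -/
noncomputable def nbProb {V : Type*} (G : SimpleGraph V) (d : ℕ) (u v : V) (t : ℕ) : ℝ :=
  (nbCount G u v t : ℝ) / (d * ((d : ℝ) - 1) ^ (t - 1))

/-- The mixing time of the non-backtracking random walk on the `d`-regular graph `G`
with `N` vertices: the least `t ≥ 1` with `|p_t(u,v) - 1/N| ≤ 1/(2N)` for all `u, v`. -/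
noncomputable def nbMixingTime {V : Type*} [Fintype V] (G : SimpleGraph V) (d : ℕ) : ℕ :=
  sInf {t : ℕ | 1 ≤ t ∧ ∀ u v : V,
    |nbProb G d u v t - 1 / (Fintype.card V : ℝ)| ≤ 1 / (2 * (Fintype.card V : ℝ))}

def nodupListEquiv (β : Type*) (k : ℕ) :
    {l : List β // l.Nodup ∧ l.length = k} ≃ (Fin k ↪ β) where
  toFun l := ⟨fun i => l.1.get (Fin.cast l.2.2.symm i), by
    intro a b hab
    have := List.nodup_iff_injective_get.1 l.2.1 hab
    simpa [Fin.ext_iff] using this⟩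
  invFun f := ⟨List.ofFn f, List.nodup_ofFn.2 f.2, by simp⟩
  left_inv := by
    rintro ⟨l, h1, rfl⟩
    simp [List.ofFn_get]
  right_inv := by
    intro f; ext i; simp [List.get_ofFn]

lemma sawCount_top (n k : ℕ) (o : Fin n) :
    sawCount (⊤ : SimpleGraph (Fin n)) o k = (n - 1).descFactorial k := by
  classical
  have hval : Function.Injective (Subtype.val : {x : Fin n // x ≠ o} → Fin n) :=
    Subtype.val_injective
  set g : {t : List {x : Fin n // x ≠ o} // t.Nodup ∧ t.length = k} →
      {l : List (Fin n) // IsSAWFrom (⊤ : SimpleGraph (Fin n)) o l ∧ l.length = k + 1} :=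
    fun t => ⟨o :: t.1.map Subtype.val, by
      have hnomem : o ∉ t.1.map Subtype.val := by
        simp only [List.mem_map, not_exists]
        rintro ⟨x, hx⟩ ⟨hmem, hval⟩
        exact hx hval
      have hnodup : (o :: t.1.map Subtype.val).Nodup := by
        refine List.nodup_cons.2 ⟨hnomem, t.2.1.map hval⟩
      refine ⟨⟨rfl, ?_, hnodup⟩, by simp [t.2.2]⟩
      exact List.Pairwise.isChain (hnodup.imp (fun h => (SimpleGraph.top_adj _ _).2 h))⟩ with hg
  have hbij : Function.Bijective g := by
    constructor
    · rintro ⟨t, ht⟩ ⟨s, hs⟩ h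
      simp only [hg, Subtype.mk.injEq, List.cons.injEq, true_and] at h
      exact Subtype.ext ((List.map_injective_iff.2 hval) h)
    · rintro ⟨l, ⟨⟨hhead, hchain, hnodup⟩, hlen⟩⟩
      match l, hhead with
      | a :: t', hhead =>
        have ha : a = o := by simpa using hhead
        subst ha
        have hmem : ∀ x ∈ t', x ≠ a := by
          intro x hx hxa
          exact (List.nodup_cons.1 hnodup).1 (hxa ▸ hx)
        refine ⟨⟨t'.pmap Subtype.mk hmem, ?_, ?_⟩, ?_⟩
        · apply List.Nodup.of_map Subtype.val
          have hu : (t'.pmap Subtype.mk hmem).map Subtype.val = t' := by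
            simp [List.map_pmap]
          rw [hu]
          exact (List.nodup_cons.1 hnodup).2
        · simpa using Nat.succ_injective (by simpa using hlen)
        · apply Subtype.ext
          simp [hg, List.map_pmap]
          simp [List.unattach, List.map_pmap]
  have := Nat.card_congr ((Equiv.ofBijective g hbij).symm.trans (nodupListEquiv _ k))
  rw [sawCount, this, Nat.card_eq_fintype_card, Fintype.card_embedding_eq, Fintype.card_fin]
  congr 1
  rw [Fintype.card_subtype_compl, Fintype.card_subtype_eq, Fintype.card_fin]

open Finset in
lemma sum_descFactorial_identity (n : ℕ) (hn : 1 ≤ n) (x : ℝ) :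
    x * ∑ k ∈ range n, (((n:ℝ) - 1) - k) * ((n-1).descFactorial k : ℝ) * x ^ k
      = (∑ k ∈ range n, ((n-1).descFactorial k : ℝ) * x ^ k) - 1 := by
  have h1 : ∀ k ∈ range n, x * ((((n:ℝ) - 1) - k) * ((n-1).descFactorial k : ℝ) * x ^ k)
      = ((n-1).descFactorial (k+1) : ℝ) * x ^ (k+1) := by
    intro k hk
    have hk' : k ≤ n - 1 := Nat.le_sub_one_of_lt (mem_range.1 hk)
    rw [Nat.descFactorial_succ]
    push_cast [Nat.cast_sub hk', Nat.cast_sub hn]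
    ring
  rw [Finset.mul_sum, Finset.sum_congr rfl h1]
  have h2 := Finset.sum_range_succ' (fun k => ((n-1).descFactorial k : ℝ) * x ^ k) n
  rw [Finset.sum_range_succ (fun k => ((n-1).descFactorial k : ℝ) * x ^ k) n] at h2
  have h3 : (n-1).descFactorial n = 0 :=
    Nat.descFactorial_eq_zero_iff_lt.2 (Nat.sub_lt (by omega) one_pos)
  rw [h3] at h2
  simp only [Nat.cast_zero, zero_mul, add_zero, Nat.descFactorial_zero, Nat.cast_one, one_mul,
    pow_zero] at h2
  linarith [h2]

open Finset in
lemma Z_lower (n : ℕ) (hn : 2 ≤ n) (ε : ℝ) (hε0 : 0 < ε) (hε : ε < 1/4) :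
    Real.exp (ε^2 * n / 16)
      ≤ ∑ k ∈ range n, ((n-1).descFactorial k : ℝ) * ((1+ε)/((n:ℝ)-1)) ^ k := by
  have hn1 : (1:ℝ) ≤ (n:ℝ) - 1 := by
    have : (2:ℝ) ≤ n := by exact_mod_cast hn
    linarith
  have hn1' : (0:ℝ) < (n:ℝ) - 1 := by linarith
  set x : ℝ := (1+ε)/((n:ℝ)-1) with hx
  have hxpos : 0 < x := by positivity
  set k₀ : ℕ := ⌈ε * ((n:ℝ)-1)/2⌉₊ with hk0
  have hk₀pos : 1 ≤ k₀ := Nat.one_le_ceil_iff.2 (by positivity)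
  have hk₀lb : ε * ((n:ℝ)-1)/2 ≤ (k₀ : ℝ) := Nat.le_ceil _
  have hk₀ub : (k₀ : ℝ) < ε * ((n:ℝ)-1)/2 + 1 := Nat.ceil_lt_add_one (by positivity)
  have hk₀n : k₀ ≤ n - 1 := by
    rw [hk0, Nat.ceil_le]
    have : ((n - 1 : ℕ) : ℝ) = (n:ℝ) - 1 := by
      push_cast [Nat.cast_sub (by omega : 1 ≤ n)]; ring
    rw [this]; nlinarith
  have hk₀mem : k₀ ∈ range n := mem_range.2 (by omega)
  -- single term bound
  have hterm : ((n-1).descFactorial k₀ : ℝ) * x ^ k₀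
      ≤ ∑ k ∈ range n, ((n-1).descFactorial k : ℝ) * x ^ k := by
    apply Finset.single_le_sum (f := fun k => ((n-1).descFactorial k : ℝ) * x ^ k) _ hk₀mem
    intro i _
    positivity
  refine le_trans ?_ hterm
  -- rewrite as product
  have hprod : ((n-1).descFactorial k₀ : ℝ) * x ^ k₀
      = ∏ j ∈ range k₀, (((n - 1 - j : ℕ) : ℝ) * x) := by
    rw [Nat.descFactorial_eq_prod_range]
    push_cast
    rw [Finset.prod_mul_distrib, Finset.prod_const, Finset.card_range]
  rw [hprod]
  -- each factor ≥ 1 + 3ε/8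
  have hfac : ∀ j ∈ range k₀, (1 + 3*ε/8 : ℝ) ≤ ((n - 1 - j : ℕ) : ℝ) * x := by
    intro j hj
    have hj' : j < k₀ := mem_range.1 hj
    have hjn : j ≤ n - 1 := by omega
    have hcast : ((n - 1 - j : ℕ) : ℝ) = (n:ℝ) - 1 - j := by
      push_cast [Nat.cast_sub hjn, Nat.cast_sub (by omega : 1 ≤ n)]; ring
    have hjr : (j : ℝ) ≤ k₀ - 1 := by
      have : (j:ℝ) + 1 ≤ k₀ := by exact_mod_cast hj'
      linarith
    have hjb : (j : ℝ) ≤ ε * ((n:ℝ)-1)/2 := by linarith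
    rw [hcast, hx, mul_div_assoc', le_div_iff₀ hn1']
    nlinarith [mul_le_mul_of_nonneg_left hjb (by linarith : (0:ℝ) ≤ 1+ε),
      mul_nonneg (mul_nonneg hε0.le (by linarith : (0:ℝ) ≤ 1/4 - ε)) (by linarith : (0:ℝ) ≤ (n:ℝ)-1)]
  have hge : (1 + 3*ε/8 : ℝ) ^ k₀ ≤ ∏ j ∈ range k₀, (((n - 1 - j : ℕ) : ℝ) * x) := by
    calc (1 + 3*ε/8 : ℝ) ^ k₀ = ∏ _j ∈ range k₀, (1 + 3*ε/8 : ℝ) := by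
          rw [Finset.prod_const, Finset.card_range]
      _ ≤ ∏ j ∈ range k₀, (((n - 1 - j : ℕ) : ℝ) * x) :=
          Finset.prod_le_prod (fun i _ => by positivity) hfac
  refine le_trans ?_ hge
  -- exp bound
  have hexp1 : Real.exp (ε/3) ≤ 1 + 3*ε/8 := by
    have h1 : (0:ℝ) < 1 - ε/3 := by linarith
    have h2 : 1 - ε/3 ≤ Real.exp (-(ε/3)) := by
      have := Real.add_one_le_exp (-(ε/3)); linarith
    have h3 : Real.exp (ε/3) ≤ (1 - ε/3)⁻¹ := by
      rw [show Real.exp (ε/3) = (Real.exp (-(ε/3)))⁻¹ by rw [Real.exp_neg, inv_inv]]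
      exact inv_anti₀ h1 h2
    refine h3.trans ?_
    rw [inv_le_iff_one_le_mul₀ h1]
    nlinarith
  calc Real.exp (ε^2 * n / 16) ≤ Real.exp ((k₀:ℝ) * (ε/3)) := by
        apply Real.exp_le_exp.2
        have hnn : (n:ℝ) ≤ 2*((n:ℝ)-1) := by linarith
        nlinarith [hk₀lb]
    _ = Real.exp (ε/3) ^ k₀ := by
        rw [← Real.exp_nat_mul]
    _ ≤ (1 + 3*ε/8) ^ k₀ := by
        apply pow_le_pow_left₀ (Real.exp_pos _).le hexp1

/-- For `0 < ε < 1/4`, `n ≥ 2`, `x = (1+ε)/(n−1)` and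
`I(ε) = max(e^{−ε²/8}, √e/2)`, the complete graph `K_n` satisfies
`|L(x, K_n) − ε(n−1)/(1+ε)| ≤ n·I(ε)^{n/2}/(1 − I(ε)^n)`. -/
theorem complete_superCritical_length_estimate (ε : ℝ) (hε0 : 0 < ε) (hε : ε < 1 / 4)
    (n : ℕ) (hn : 2 ≤ n) :
    |completeL n ((1 + ε) / ((n : ℝ) - 1)) - ε * ((n : ℝ) - 1) / (1 + ε)| ≤
      (n : ℝ) * max (Real.exp (-ε ^ 2 / 8)) (Real.sqrt (Real.exp 1) / 2) ^ ((n : ℝ) / 2) /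
        (1 - max (Real.exp (-ε ^ 2 / 8)) (Real.sqrt (Real.exp 1) / 2) ^ n) := by
  have h0n : 0 < n := by omega
  have hn2 : (2:ℝ) ≤ (n:ℝ) := by exact_mod_cast hn
  have hn1 : (1:ℝ) ≤ (n:ℝ) - 1 := by linarith
  have hn1' : (0:ℝ) < (n:ℝ) - 1 := by linarith
  set x : ℝ := (1 + ε) / ((n:ℝ) - 1) with hx
  have hxpos : 0 < x := by positivity
  set Zs : ℝ := ∑ k ∈ Finset.range n, ((n-1).descFactorial k : ℝ) * x ^ k with hZs
  set Ns : ℝ := ∑ k ∈ Finset.range n, (k : ℝ) * ((n-1).descFactorial k : ℝ) * x ^ k with hNs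
  have hZeq : sawZ (⊤ : SimpleGraph (Fin n)) ⟨0, h0n⟩ x = Zs := by
    rw [sawZ, hZs]
    simp only [Fintype.card_fin, sawCount_top]
  have hNeq : ∑ k ∈ Finset.range (Fintype.card (Fin n)),
      (k : ℝ) * (sawCount (⊤ : SimpleGraph (Fin n)) ⟨0, h0n⟩ k : ℝ) * x ^ k = Ns := by
    rw [hNs]
    simp only [Fintype.card_fin, sawCount_top]
  have hZ1 : (1:ℝ) ≤ Zs := by
    rw [hZs]
    calc (1:ℝ) = ((n-1).descFactorial 0 : ℝ) * x ^ 0 := by simp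
      _ ≤ _ := Finset.single_le_sum (f := fun k => ((n-1).descFactorial k : ℝ) * x ^ k)
          (fun i _ => by positivity) (Finset.mem_range.2 h0n)
  have hZpos : (0:ℝ) < Zs := lt_of_lt_of_le one_pos hZ1
  -- the exact identity
  have hid := sum_descFactorial_identity n (by omega) x
  have hsplit : ∑ k ∈ Finset.range n, (((n:ℝ) - 1) - k) * ((n-1).descFactorial k : ℝ) * x ^ k
      = ((n:ℝ) - 1) * Zs - Ns := by
    rw [hZs, hNs, Finset.mul_sum, ← Finset.sum_sub_distrib]
    apply Finset.sum_congr rfl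
    intro k _
    ring
  rw [hsplit, ← hZs] at hid
  have hid2 : (1 + ε) * (((n:ℝ) - 1) * Zs - Ns) = ((n:ℝ) - 1) * (Zs - 1) := by
    rw [hx, div_mul_eq_mul_div, div_eq_iff (ne_of_gt hn1')] at hid
    linear_combination hid
  have hL : completeL n x - ε * ((n:ℝ) - 1) / (1 + ε) = ((n:ℝ) - 1) / ((1 + ε) * Zs) := by
    rw [completeL, dif_pos h0n, sawL, hNeq, hZeq]
    field_simp
    linear_combination (-1) * hid2
  have hA : Real.exp (ε^2 * n / 16) ≤ Zs := by
    rw [hZs, hx]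
    exact Z_lower n hn ε hε0 hε
  clear_value Zs Ns x
  clear hid hsplit hid2 hZeq hNeq hZs hNs hx hZ1
  rw [hL]
  -- the max is the first argument
  have hsqrt : Real.sqrt (Real.exp 1) = Real.exp (1/2) := by
    rw [show Real.exp 1 = Real.exp (1/2) * Real.exp (1/2) by rw [← Real.exp_add]; norm_num]
    exact Real.sqrt_mul_self (Real.exp_pos _).le
  have key2 : Real.exp (1/2 + ε^2/8) ≤ 2 := by
    have h51 : 1/2 + ε^2/8 ≤ (51/100 : ℝ) := by nlinarith
    refine (Real.exp_le_exp.2 h51).trans ?_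
    have e1 : Real.exp 1 < 2.7182818286 := Real.exp_one_lt_d9
    have e2 : Real.exp (1/50 : ℝ) ≤ (50/49 : ℝ) := by
      have h2 := Real.add_one_le_exp (-(1/50 : ℝ))
      rw [show Real.exp (1/50 : ℝ) = (Real.exp (-(1/50 : ℝ)))⁻¹ by rw [Real.exp_neg, inv_inv]]
      calc (Real.exp (-(1/50:ℝ)))⁻¹ ≤ ((49/50:ℝ))⁻¹ := inv_anti₀ (by norm_num) (by linarith)
        _ = 50/49 := by norm_num
    have e3 : Real.exp (51/100 : ℝ) ^ 2 = Real.exp 1 * Real.exp (1/50 : ℝ) := by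
      rw [sq, ← Real.exp_add, ← Real.exp_add]; norm_num
    have e4 : Real.exp (51/100 : ℝ) ^ 2 < 4 := by
      rw [e3]
      nlinarith [Real.exp_pos (1/50 : ℝ), (Real.exp_pos 1).le]
    nlinarith [Real.exp_pos (51/100 : ℝ)]
  have hmax : max (Real.exp (-ε ^ 2 / 8)) (Real.sqrt (Real.exp 1) / 2) = Real.exp (-ε ^ 2 / 8) := by
    rw [max_eq_left]
    rw [hsqrt, div_le_iff₀ (by norm_num : (0:ℝ) < 2)]
    have hsplit2 : Real.exp (1/2 : ℝ) = Real.exp (-ε^2/8) * Real.exp (1/2 + ε^2/8) := by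
      rw [← Real.exp_add]; ring_nf
    rw [hsplit2]
    exact mul_le_mul_of_nonneg_left key2 (Real.exp_pos _).le
  rw [hmax]
  have hpow1 : Real.exp (-ε ^ 2 / 8) ^ ((n:ℝ)/2) = Real.exp (-(ε^2 * n / 16)) := by
    rw [← Real.exp_mul]
    ring_nf
  have hpow2 : Real.exp (-ε ^ 2 / 8) ^ n = Real.exp ((n:ℝ) * (-ε^2/8)) := by
    rw [← Real.exp_nat_mul]
  rw [hpow1, hpow2]
  have hden : 0 < 1 - Real.exp ((n:ℝ) * (-ε^2/8)) := by
    have : (n:ℝ) * (-ε^2/8) < 0 := by nlinarith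
    have := Real.exp_lt_one_iff.2 this
    linarith
  have hden1 : 1 - Real.exp ((n:ℝ) * (-ε^2/8)) ≤ 1 := by
    have := Real.exp_pos ((n:ℝ) * (-ε^2/8))
    linarith
  have habs : |((n:ℝ) - 1) / ((1 + ε) * Zs)| = ((n:ℝ) - 1) / ((1 + ε) * Zs) := by
    apply abs_of_nonneg
    positivity
  rw [habs]
  have hApos : (0:ℝ) < Real.exp (ε^2 * n / 16) := Real.exp_pos _
  calc ((n:ℝ) - 1) / ((1 + ε) * Zs)
      ≤ ((n:ℝ) - 1) / ((1 + ε) * Real.exp (ε^2 * n / 16)) := by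
        apply div_le_div_of_nonneg_left (by linarith) (by positivity)
        have : (0:ℝ) < 1 + ε := by linarith
        nlinarith [hA, hApos]
    _ ≤ (n:ℝ) * Real.exp (-(ε^2 * n / 16)) := by
        rw [Real.exp_neg, div_eq_mul_inv, mul_inv]
        have h1 : ((n:ℝ) - 1) * (1 + ε)⁻¹ ≤ (n:ℝ) := by
          rw [mul_inv_le_iff₀ (by linarith : (0:ℝ) < 1 + ε)]
          nlinarith
        rw [← mul_assoc]
        apply mul_le_mul_of_nonneg_right h1 (by positivity)
    _ ≤ (n:ℝ) * Real.exp (-(ε^2 * n / 16)) / (1 - Real.exp ((n:ℝ) * (-ε^2/8))) := by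
        apply le_div_self (by positivity) hden hden1
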